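/- Let V be a finite set of nodes with |D(u)| ≥ 2/ε for every u (where D(u) denotes u's closed neighborhood), and fix a time interval I. Suppose every node v has at least ε|I| non-jammed rounds in I. Let J ⊆ I be the set of rounds in which at most one node of D(u) is non-jammed. Then |J| ≤ (1 − ε/2)|I|. -/

import Mathlib

/-- If `D(u)` contains at least `2/ε` nodes, each with at least `ε|I|`
non-jammed rounds in the interval `I`, then the set `J` of rounds of `I` in
which at most one node of `D(u)` is non-jammed satisfies
`|J| ≤ (1 − ε/2)|I|`. -/
theorem stmt12 {ι : Type*} [DecidableEq ι] (Du : Finset ι) (I : Finset ℕ)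
    (nj : ι → ℕ → Bool) (ε : ℝ) (hε : 0 < ε) (hε1 : ε ≤ 1)
    (hdense : (2 : ℝ) / ε ≤ (Du.card : ℝ))
    (hnj : ∀ v ∈ Du, ε * (I.card : ℝ) ≤ ((I.filter (fun t => nj v t)).card : ℝ)) :
    (((I.filter (fun t => (Du.filter (fun v => nj v t)).card ≤ 1)).card : ℝ))
      ≤ (1 - ε / 2) * (I.card : ℝ) := by
  by_contra hcon
  push_neg at hcon
  set J := I.filter (fun t => (Du.filter (fun v => nj v t)).card ≤ 1) with hJ
  have hJI : J ⊆ I := Finset.filter_subset _ _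
  have hJle : (J.card : ℝ) ≤ (I.card : ℝ) := by
    exact_mod_cast Finset.card_le_card hJI
  -- double counting : sum over v of non-jammed rounds in J ≤ |J|
  have hsum : ∑ v ∈ Du, ((J.filter (fun t => nj v t)).card : ℝ) ≤ (J.card : ℝ) := by
    have h1 : ∑ v ∈ Du, (J.filter (fun t => nj v t)).card
        = ∑ t ∈ J, (Du.filter (fun v => nj v t)).card := by
      simp only [Finset.card_filter]
      rw [Finset.sum_comm]
    have h2 : ∑ t ∈ J, (Du.filter (fun v => nj v t)).card ≤ J.card := by
      calc ∑ t ∈ J, (Du.filter (fun v => nj v t)).card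
          ≤ ∑ t ∈ J, 1 := by
            apply Finset.sum_le_sum
            intro t ht
            exact (Finset.mem_filter.mp ht).2
        _ = J.card := by simp
    exact_mod_cast h1 ▸ h2
  -- each node has many non-jammed rounds in J
  have hdiff : ((I \ J).card : ℝ) = (I.card : ℝ) - (J.card : ℝ) := by
    rw [Finset.card_sdiff_of_subset hJI]
    have := Finset.card_le_card hJI
    push_cast [Nat.cast_sub this]
    ring
  have hdiffsmall : ((I \ J).card : ℝ) < ε / 2 * (I.card : ℝ) := by
    rw [hdiff]; nlinarith [hcon]
  have hper : ∀ v ∈ Du, ε / 2 * (I.card : ℝ) < ((J.filter (fun t => nj v t)).card : ℝ) := by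
    intro v hv
    have hsub : I.filter (fun t => nj v t) ⊆ (J.filter (fun t => nj v t)) ∪ (I \ J) := by
      intro t ht
      rw [Finset.mem_filter] at ht
      by_cases htJ : t ∈ J
      · exact Finset.mem_union_left _ (Finset.mem_filter.mpr ⟨htJ, ht.2⟩)
      · exact Finset.mem_union_right _ (Finset.mem_sdiff.mpr ⟨ht.1, htJ⟩)
    have hcard : ((I.filter (fun t => nj v t)).card : ℝ)
        ≤ ((J.filter (fun t => nj v t)).card : ℝ) + ((I \ J).card : ℝ) := by
      have := (Finset.card_le_card hsub).trans (Finset.card_union_le _ _)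
      exact_mod_cast this
    have := hnj v hv
    nlinarith
  -- Du is nonempty
  have hDu0 : (0 : ℝ) < (Du.card : ℝ) := lt_of_lt_of_le (by positivity) hdense
  have hDune : Du.Nonempty := by
    rw [← Finset.card_pos]
    exact_mod_cast hDu0
  have hsumgt : (Du.card : ℝ) * (ε / 2 * (I.card : ℝ))
      < ∑ v ∈ Du, ((J.filter (fun t => nj v t)).card : ℝ) := by
    have := Finset.sum_lt_sum_of_nonempty hDune hper
    simpa [Finset.sum_const, nsmul_eq_mul] using this
  have hIle : (I.card : ℝ) ≤ (Du.card : ℝ) * (ε / 2 * (I.card : ℝ)) := by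
    have h0 : (0 : ℝ) ≤ (I.card : ℝ) := Nat.cast_nonneg _
    have : (2 / ε) * (ε / 2 * (I.card : ℝ)) ≤ (Du.card : ℝ) * (ε / 2 * (I.card : ℝ)) := by
      apply mul_le_mul_of_nonneg_right hdense
      positivity
    calc (I.card : ℝ) = (2 / ε) * (ε / 2 * (I.card : ℝ)) := by
          field_simp
      _ ≤ _ := this
  linarith
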